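/- Let β ∈ [1/2, 2] and define P : ℝ² \ {0} → ℝ by P(x) := v_β(θ(x)) / |x|³, where θ(x) is a polar angle of x. Then P is twice continuously differentiable on ℝ² \ {0} and satisfies ∂²P/∂x₁²(x) + ∂²P/∂x₂²(x) = (β x₁² + x₂²)^{-5/2} for every x = (x₁, x₂) ∈ ℝ² \ {0}. -/

import Mathlib

open Real MeasureTheory Filter Topology Set
open scoped ENNReal RealInnerProductSpace

noncomputable section

/-- The forcing term `f_β(θ) = (β cos²θ + sin²θ)^(-5/2)`. -/
def fker (β θ : ℝ) : ℝ := (β * Real.cos θ ^ 2 + Real.sin θ ^ 2) ^ (-(5:ℝ)/2)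

/-- `v` is a π-periodic, twice continuously differentiable solution of `v'' + 9 v = f_β`. -/
def IsVBeta (β : ℝ) (v : ℝ → ℝ) : Prop :=
  ContDiff ℝ 2 v ∧ Function.Periodic v π ∧
    ∀ θ : ℝ, deriv (deriv v) θ + 9 * v θ = fker β θ


/-- `P(x) = v(θ(x)) / |x|³` in Cartesian coordinates on `ℝ²`, where `θ(x)` is a polar
angle of `x` (chosen as `Complex.arg`; since `v` is π-periodic the choice is immaterial). -/
def Pfun (v : ℝ → ℝ) (x : ℝ × ℝ) : ℝ :=
  v (Complex.arg ((x.1 : ℂ) + (x.2 : ℂ) * Complex.I)) / (x.1^2 + x.2^2) ^ ((3:ℝ)/2)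

/- ### Auxiliary lemmas -/

lemma argIm : Complex.arg = fun w => (Complex.log w).im :=
  funext fun w => (Complex.log_im w).symm

lemma contDiffAt_arg' {z : ℂ} (hz : z ∈ Complex.slitPlane) : ContDiffAt ℝ 2 Complex.arg z := by
  rw [argIm]
  exact Complex.imCLM.contDiff.contDiffAt.comp z
    ((Complex.contDiffAt_log (n := 2) hz).restrict_scalars ℝ)

lemma hasDerivAt_arg_line {a b : ℝ} (h : ((a:ℂ) + (b:ℂ) * Complex.I) ∈ Complex.slitPlane) :
    HasDerivAt (fun t : ℝ => Complex.arg ((t:ℂ) + (b:ℂ) * Complex.I)) (-b / (a^2 + b^2)) a := by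
  set z : ℂ := (a:ℂ) + (b:ℂ) * Complex.I with hzdef
  have hline : HasDerivAt (fun t : ℝ => (t:ℂ) + (b:ℂ) * Complex.I) 1 a := by
    simpa using (Complex.ofRealCLM.hasDerivAt (x := a)).add_const ((b:ℂ) * Complex.I)
  have hlog : HasDerivAt (fun t : ℝ => Complex.log ((t:ℂ) + (b:ℂ)*Complex.I)) z⁻¹ a := by
    have := ((Complex.hasDerivAt_log h).hasFDerivAt.restrictScalars ℝ).comp_hasDerivAt a hline
    simpa [Function.comp_def] using this
  have him : HasDerivAt (fun t : ℝ => (Complex.log ((t:ℂ) + (b:ℂ)*Complex.I)).im) (z⁻¹).im a :=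
    (Complex.imCLM.hasFDerivAt.comp_hasDerivAt a hlog)
  have : (z⁻¹).im = -b / (a^2 + b^2) := by
    rw [Complex.inv_im]
    have h1 : z.im = b := by simp [hzdef]
    have h2 : Complex.normSq z = a^2 + b^2 := by
      simp [hzdef, Complex.normSq_apply]; ring
    rw [h1, h2, neg_div]
  rw [argIm]
  exact this ▸ him

lemma hasDerivAt_arg_line_v {a b : ℝ} (h : ((a:ℂ) + (b:ℂ) * Complex.I) ∈ Complex.slitPlane) :
    HasDerivAt (fun t : ℝ => Complex.arg ((a:ℂ) + (t:ℂ) * Complex.I)) (a / (a^2 + b^2)) b := by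
  set z : ℂ := (a:ℂ) + (b:ℂ) * Complex.I with hzdef
  have hline : HasDerivAt (fun t : ℝ => (a:ℂ) + (t:ℂ) * Complex.I) Complex.I b := by
    have : HasDerivAt (fun t : ℝ => (t:ℂ)) 1 b := Complex.ofRealCLM.hasDerivAt
    simpa using ((this.mul_const Complex.I).const_add (a:ℂ))
  have hlog : HasDerivAt (fun t : ℝ => Complex.log ((a:ℂ) + (t:ℂ)*Complex.I)) (Complex.I * z⁻¹) b := by
    have := ((Complex.hasDerivAt_log h).hasFDerivAt.restrictScalars ℝ).comp_hasDerivAt b hline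
    simpa [smul_eq_mul, Function.comp_def] using this
  have him := (Complex.imCLM.hasFDerivAt.comp_hasDerivAt b hlog)
  have hval : (Complex.I * z⁻¹).im = a / (a^2 + b^2) := by
    have h2 : Complex.normSq z = a^2 + b^2 := by
      simp [hzdef, Complex.normSq_apply]; ring
    simp [Complex.mul_im, Complex.inv_re, Complex.inv_im, h2, hzdef]
    rw [← hzdef, h2]
  rw [argIm]
  exact hval ▸ him

lemma periodic_arg_neg {v : ℝ → ℝ} (hp : Function.Periodic v π) {z : ℂ} (hz : z ≠ 0) :
    v (Complex.arg (-z)) = v (Complex.arg z) := by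
  have h := Complex.arg_neg_coe_angle hz
  rw [← Real.Angle.coe_add, Real.Angle.angle_eq_iff_two_pi_dvd_sub] at h
  obtain ⟨k, hk⟩ := h
  have : Complex.arg (-z) = Complex.arg z + (2*k+1) * π := by linarith
  rw [this]
  have := (hp.int_mul (2*k+1)) (Complex.arg z)
  push_cast at this
  convert this using 2

lemma Pfun_neg {v : ℝ → ℝ} (hp : Function.Periodic v π) (x : ℝ × ℝ) :
    Pfun v (-x) = Pfun v x := by
  rcases eq_or_ne x 0 with rfl | hx
  · simp
  · have hz : ((x.1 : ℂ) + (x.2 : ℂ) * Complex.I) ≠ 0 := by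
      simp only [ne_eq, Complex.ext_iff, Complex.add_re, Complex.add_im, Complex.ofReal_re,
        Complex.ofReal_im, Complex.mul_re, Complex.mul_im, Complex.I_re, Complex.I_im]
      intro h
      apply hx
      have h1 : x.1 = 0 := by simpa using h.1
      have h2 : x.2 = 0 := by simpa using h.2
      exact Prod.ext h1 h2
    have hneg : (((-x).1 : ℂ) + ((-x).2 : ℂ) * Complex.I) = -((x.1:ℂ) + (x.2:ℂ)*Complex.I) := by
      simp; ring
    unfold Pfun
    rw [hneg, periodic_arg_neg hp hz]
    simp [Prod.fst_neg, Prod.snd_neg, neg_pow]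

lemma deriv2_comp_neg (g : ℝ → ℝ) (x : ℝ) (hg : ∀ᶠ t in 𝓝 (-x), DifferentiableAt ℝ g t) :
    deriv (deriv (fun t => g (-t))) x = deriv (deriv g) (-x) := by
  have h1 : deriv (fun t => g (-t)) =ᶠ[𝓝 x] fun t => -deriv g (-t) := by
    filter_upwards [(continuous_neg.tendsto x).eventually hg] with t _
    rw [deriv_comp_neg]
  rw [h1.deriv_eq, deriv.fun_neg, deriv_comp_neg, neg_neg]

lemma mySlice (v : ℝ → ℝ) (hd : Differentiable ℝ v) (hd2 : Differentiable ℝ (deriv v))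
    (e ε x₀ : ℝ) (hε : ε = 1 ∨ ε = -1) (hpos : 0 < x₀^2 + e^2) (A f : ℝ → ℝ)
    (hA : ∀ᶠ t in 𝓝 x₀, HasDerivAt A (ε * e / (t^2 + e^2)) t)
    (hf : ∀ᶠ t in 𝓝 x₀, f t = v (A t) / (t^2 + e^2) ^ ((3:ℝ)/2)) :
    (∀ᶠ t in 𝓝 x₀, DifferentiableAt ℝ f t) ∧
    deriv (deriv f) x₀ =
      (deriv (deriv v) (A x₀) * e^2 - 8*ε*e*x₀ * deriv v (A x₀) + 15*x₀^2 * v (A x₀))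
          / Real.sqrt (x₀^2 + e^2) ^ 7
        - 3 * v (A x₀) / Real.sqrt (x₀^2 + e^2) ^ 5 := by
  set S : ℝ → ℝ := fun t => Real.sqrt (t^2 + e^2) with hSdef
  set F : ℝ → ℝ := fun t => v (A t) / S t ^ 3 with hFdef
  set G : ℝ → ℝ := fun t =>
    (deriv v (A t) * (ε * e) - 3 * t * v (A t)) / S t ^ 5 with hGdef
  have hρev : ∀ᶠ t in 𝓝 x₀, 0 < t^2 + e^2 := by
    have hc : Continuous fun t : ℝ => t^2 + e^2 := by continuity
    exact (hc.tendsto x₀).eventually (eventually_gt_nhds hpos)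
  have hSpos : ∀ t : ℝ, 0 < t^2 + e^2 → 0 < S t := fun t ht => Real.sqrt_pos.mpr ht
  have hSsq : ∀ t : ℝ, 0 < t^2 + e^2 → S t ^ 2 = t^2 + e^2 := fun t ht => Real.sq_sqrt ht.le
  have hfF : f =ᶠ[𝓝 x₀] F := by
    filter_upwards [hf, hρev] with t h1 h2
    have hs := hSpos t h2
    have h3 : ((t^2 + e^2) : ℝ) ^ ((3:ℝ)/2) = S t ^ (3:ℕ) := by
      rw [← hSsq t h2, ← Real.rpow_natCast (S t) 2, ← Real.rpow_mul hs.le,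
        ← Real.rpow_natCast (S t) 3]
      norm_num
    rw [h1, hFdef, h3]
  have hS' : ∀ t : ℝ, 0 < t^2 + e^2 → HasDerivAt S (t / S t) t := by
    intro t hρ
    have hinner : HasDerivAt (fun u : ℝ => u^2 + e^2) (2*t) t := by
      simpa using (hasDerivAt_pow 2 t).add_const (e^2)
    have := (Real.hasDerivAt_sqrt hρ.ne').comp t hinner
    refine this.congr_deriv (Eq.symm ?_)
    have hs := (hSpos t hρ).ne'
    field_simp [hSdef]
    ring
  have hFder : ∀ t : ℝ, 0 < t^2 + e^2 → HasDerivAt A (ε * e / (t^2 + e^2)) t →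
      HasDerivAt F (G t) t := by
    intro t hρ hAt
    have hs := hSpos t hρ
    have hvA : HasDerivAt (fun u => v (A u)) (deriv v (A t) * (ε * e / (t^2 + e^2))) t :=
      (hd (A t)).hasDerivAt.comp t hAt
    have hden : HasDerivAt (fun u => S u ^ 3) ((3:ℝ) * S t ^ 2 * (t / S t)) t :=
      (hS' t hρ).pow 3
    have := hvA.div hden (by positivity)
    refine this.congr_deriv (Eq.symm ?_)
    rw [hGdef, ← hSsq t hρ]
    field_simp
  have hFderEv : ∀ᶠ t in 𝓝 x₀, HasDerivAt F (G t) t := by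
    filter_upwards [hρev, hA] with t h1 h2 using hFder t h1 h2
  have hdiff : ∀ᶠ t in 𝓝 x₀, DifferentiableAt ℝ f t := by
    filter_upwards [hFderEv, hfF.eventually_nhds] with t h1 h2
    exact (Filter.EventuallyEq.differentiableAt_iff h2).mpr h1.differentiableAt
  refine ⟨hdiff, ?_⟩
  have hderivEq : deriv f =ᶠ[𝓝 x₀] G := by
    filter_upwards [hfF.deriv, hFderEv] with t h1 h2
    rw [h1, h2.deriv]
  rw [hderivEq.deriv_eq]
  have hρ0 := hpos
  have hs0 := hSpos x₀ hρ0
  have hA0 : HasDerivAt A (ε * e / (x₀^2 + e^2)) x₀ := hA.self_of_nhds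
  have h1 : HasDerivAt (fun t => deriv v (A t))
      (deriv (deriv v) (A x₀) * (ε * e / (x₀^2 + e^2))) x₀ :=
    (hd2 (A x₀)).hasDerivAt.comp x₀ hA0
  have hv0 : HasDerivAt (fun t => v (A t)) (deriv v (A x₀) * (ε * e / (x₀^2 + e^2))) x₀ :=
    (hd (A x₀)).hasDerivAt.comp x₀ hA0
  have hlin : HasDerivAt (fun t : ℝ => 3 * t) 3 x₀ := by
    simpa using (hasDerivAt_id x₀).const_mul (3:ℝ)
  have hnum : HasDerivAt (fun t => deriv v (A t) * (ε * e) - 3 * t * v (A t))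
      (deriv (deriv v) (A x₀) * (ε * e / (x₀^2 + e^2)) * (ε * e)
        - (3 * v (A x₀) + 3 * x₀ * (deriv v (A x₀) * (ε * e / (x₀^2 + e^2))))) x₀ := by
    have := (h1.mul_const (ε * e)).sub (hlin.mul hv0)
    exact this
  have hden : HasDerivAt (fun u => S u ^ 5) ((5:ℝ) * S x₀ ^ 4 * (x₀ / S x₀)) x₀ :=
    (hS' x₀ hρ0).pow 5
  have hG := hnum.div hden (by positivity)
  rw [show deriv G x₀ = _ from hG.deriv]
  rw [← hSsq x₀ hρ0]
  rw [Real.sqrt_sq hs0.le]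
  field_simp
  rcases hε with rfl | rfl <;> ring

lemma lap_slit (β : ℝ) (hβ : 0 < β) (v : ℝ → ℝ) (hv : IsVBeta β v) (a b : ℝ)
    (h : ((a:ℂ) + (b:ℂ) * Complex.I) ∈ Complex.slitPlane) :
    (∀ᶠ t in 𝓝 a, DifferentiableAt ℝ (fun t => Pfun v (t, b)) t) ∧
    (∀ᶠ t in 𝓝 b, DifferentiableAt ℝ (fun t => Pfun v (a, t)) t) ∧
    deriv (deriv (fun t => Pfun v (t, b))) a + deriv (deriv (fun t => Pfun v (a, t))) b
      = (β * a^2 + b^2) ^ (-(5:ℝ)/2) := by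
  have hz : ((a:ℂ) + (b:ℂ) * Complex.I) ≠ 0 := Complex.slitPlane_ne_zero h
  have hab : a ≠ 0 ∨ b ≠ 0 := by
    by_contra hc
    push_neg at hc
    exact hz (by simp [hc.1, hc.2])
  have hρ : 0 < a^2 + b^2 := by rcases hab with h' | h' <;> positivity
  have hd : Differentiable ℝ v := hv.1.differentiable (by norm_num)
  have hd2 : Differentiable ℝ (deriv v) := by
    have h2 : ContDiff ℝ (1 + 1 : ℕ) v := by exact_mod_cast hv.1
    have := (contDiff_succ_iff_deriv.mp (by exact_mod_cast h2 : ContDiff ℝ ((1:ℕ∞) + 1) v)).2.2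
    exact this.differentiable (by norm_num)
  -- horizontal slice
  have hAh : ∀ᶠ t in 𝓝 a, HasDerivAt (fun t : ℝ => Complex.arg ((t:ℂ) + (b:ℂ) * Complex.I))
      ((-1) * b / (t^2 + b^2)) t := by
    have hopen : IsOpen {t : ℝ | ((t:ℂ) + (b:ℂ) * Complex.I) ∈ Complex.slitPlane} :=
      Complex.isOpen_slitPlane.preimage (by continuity)
    filter_upwards [hopen.mem_nhds h] with t ht
    have := hasDerivAt_arg_line ht
    convert this using 1
    ring
  have Hh := mySlice v hd hd2 b (-1) a (Or.inr rfl) hρ _ (fun t => Pfun v (t, b)) hAh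
    (Filter.Eventually.of_forall fun t => rfl)
  -- vertical slice
  have hAv : ∀ᶠ t in 𝓝 b, HasDerivAt (fun t : ℝ => Complex.arg ((a:ℂ) + (t:ℂ) * Complex.I))
      (1 * a / (t^2 + a^2)) t := by
    have hopen : IsOpen {t : ℝ | ((a:ℂ) + (t:ℂ) * Complex.I) ∈ Complex.slitPlane} :=
      Complex.isOpen_slitPlane.preimage (by continuity)
    filter_upwards [hopen.mem_nhds h] with t ht
    have := hasDerivAt_arg_line_v ht
    convert this using 1
    ring
  have Hv := mySlice v hd hd2 a 1 b (Or.inl rfl) (by linarith) _ (fun t => Pfun v (a, t)) hAv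
    (Filter.Eventually.of_forall fun t => by
      simp only [Pfun]
      rw [add_comm (a^2) (t^2)])
  refine ⟨Hh.1, Hv.1, ?_⟩
  rw [Hh.2, Hv.2]
  set θ := Complex.arg ((a:ℂ) + (b:ℂ) * Complex.I) with hθ
  set s := Real.sqrt (a^2 + b^2) with hsdef
  have hs : 0 < s := Real.sqrt_pos.mpr hρ
  have hssq : s ^ 2 = a^2 + b^2 := Real.sq_sqrt hρ.le
  have hsrw : Real.sqrt (b^2 + a^2) = s := by rw [hsdef, add_comm]
  rw [hsrw]
  have hX : 0 < β * a^2 + b^2 := by rcases hab with h' | h' <;> positivity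
  have step1 :
      (deriv (deriv v) θ * b^2 - 8*(-1)*b*a * deriv v θ + 15*a^2 * v θ) / s ^ 7
          - 3 * v θ / s ^ 5
        + ((deriv (deriv v) θ * a^2 - 8*1*a*b * deriv v θ + 15*b^2 * v θ) / s ^ 7
          - 3 * v θ / s ^ 5)
      = (deriv (deriv v) θ + 9 * v θ) / s ^ 5 := by
    have e1 : (deriv (deriv v) θ * b^2 - 8*(-1)*b*a * deriv v θ + 15*a^2 * v θ) / s ^ 7
          - 3 * v θ / s ^ 5
        + ((deriv (deriv v) θ * a^2 - 8*1*a*b * deriv v θ + 15*b^2 * v θ) / s ^ 7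
          - 3 * v θ / s ^ 5)
        = (deriv (deriv v) θ * (a^2+b^2) + 15*(a^2+b^2) * v θ) / s ^ 7 - 6 * v θ / s ^ 5 := by
      ring
    rw [e1, ← hssq]
    field_simp
    ring
  rw [step1, hv.2.2 θ]
  -- now : fker β θ / s^5 = (β a² + b²)^(-5/2)
  have habs : ‖((a:ℂ) + (b:ℂ) * Complex.I)‖ = s := by
    rw [Complex.norm_def, Complex.normSq_apply]
    rw [hsdef]
    norm_num
    ring_nf
  have hcos : Real.cos θ = a / s := by
    rw [hθ, Complex.cos_arg hz, habs]
    norm_num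
  have hsin : Real.sin θ = b / s := by
    rw [hθ, Complex.sin_arg, habs]
    norm_num
  have hbase : β * Real.cos θ ^ 2 + Real.sin θ ^ 2 = (β * a^2 + b^2) / s^2 := by
    rw [hcos, hsin]
    field_simp
  have h25 : ((s^2 : ℝ)) ^ (-(5:ℝ)/2) * s^5 = 1 := by
    have h1 : ((s^2 : ℝ)) ^ (-(5:ℝ)/2) = s ^ (-(5:ℝ)) := by
      rw [← Real.rpow_natCast s 2, ← Real.rpow_mul hs.le]
      norm_num
    rw [h1, ← Real.rpow_natCast s 5, ← Real.rpow_add hs]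
    norm_num
  rw [fker, hbase, Real.div_rpow hX.le (sq_nonneg s)]
  rw [div_div, h25, div_one]

lemma not_slit_struct {x : ℝ × ℝ} (hx : x ≠ 0)
    (hy : ((x.1:ℂ) + (x.2:ℂ) * Complex.I) ∉ Complex.slitPlane) :
    x.1 < 0 ∧ x.2 = 0 := by
  rw [Complex.mem_slitPlane_iff] at hy
  push_neg at hy
  have hre : ((x.1:ℂ) + (x.2:ℂ) * Complex.I).re = x.1 := by simp
  have him : ((x.1:ℂ) + (x.2:ℂ) * Complex.I).im = x.2 := by simp
  rw [hre, him] at hy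
  refine ⟨lt_of_le_of_ne hy.1 ?_, hy.2⟩
  intro h1
  exact hx (Prod.ext h1 hy.2)

/-- `P` is C² away from the origin and `ΔP(x) = (β x₁² + x₂²)^{-5/2}`. -/
theorem stmt7 (β : ℝ) (hβ : β ∈ Set.Icc (1/2 : ℝ) 2) (v : ℝ → ℝ) (hv : IsVBeta β v) :
    ContDiffOn ℝ 2 (Pfun v) {(0 : ℝ × ℝ)}ᶜ ∧
    ∀ x : ℝ × ℝ, x ≠ 0 →
      deriv (deriv (fun t : ℝ => Pfun v (t, x.2))) x.1
        + deriv (deriv (fun t : ℝ => Pfun v (x.1, t))) x.2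
        = (β * x.1^2 + x.2^2) ^ (-(5:ℝ)/2) := by
  have hβpos : (0:ℝ) < β := lt_of_lt_of_le (by norm_num) hβ.1
  have key : ∀ y : ℝ × ℝ, ((y.1:ℂ) + (y.2:ℂ) * Complex.I) ∈ Complex.slitPlane →
      ContDiffAt ℝ 2 (Pfun v) y := by
    intro y hy
    have hzne := Complex.slitPlane_ne_zero hy
    have hρ : 0 < y.1^2 + y.2^2 := by
      have h1 : y.1 ≠ 0 ∨ y.2 ≠ 0 := by
        by_contra hc
        push_neg at hc
        exact hzne (by simp [hc.1, hc.2])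
      rcases h1 with h' | h' <;> positivity
    have hmap : ContDiff ℝ 2 (fun p : ℝ × ℝ => (p.1:ℂ) + (p.2:ℂ) * Complex.I) := by
      apply ContDiff.add
      · exact Complex.ofRealCLM.contDiff.comp contDiff_fst
      · exact (Complex.ofRealCLM.contDiff.comp contDiff_snd).mul contDiff_const
    have hnum : ContDiffAt ℝ 2
        (fun p : ℝ × ℝ => v (Complex.arg ((p.1:ℂ) + (p.2:ℂ) * Complex.I))) y :=
      hv.1.contDiffAt.comp y ((contDiffAt_arg' hy).comp (g := Complex.arg) y hmap.contDiffAt)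
    have hb : ContDiffAt ℝ 2 (fun p : ℝ × ℝ => p.1^2 + p.2^2) y :=
      (((contDiff_fst (𝕜 := ℝ) (E := ℝ) (F := ℝ)).pow 2).add
        ((contDiff_snd (𝕜 := ℝ) (E := ℝ) (F := ℝ)).pow 2)).contDiffAt
    have hden : ContDiffAt ℝ 2 (fun p : ℝ × ℝ => (p.1^2 + p.2^2) ^ ((3:ℝ)/2)) y :=
      (Real.contDiffAt_rpow_const_of_ne hρ.ne').comp (g := fun b : ℝ => b ^ ((3:ℝ)/2)) y hb
    have hden0 : (y.1^2 + y.2^2) ^ ((3:ℝ)/2) ≠ 0 := by positivity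
    exact hnum.div hden hden0
  constructor
  · intro x hx
    have hx0 : x ≠ 0 := by simpa using hx
    suffices h : ContDiffAt ℝ 2 (Pfun v) x from h.contDiffWithinAt
    by_cases hy : ((x.1:ℂ) + (x.2:ℂ) * Complex.I) ∈ Complex.slitPlane
    · exact key x hy
    · obtain ⟨ha, hb⟩ := not_slit_struct hx0 hy
      have hPeq : Pfun v = fun p => Pfun v (-p) := funext fun p => (Pfun_neg hv.2.1 p).symm
      have hslit : (((-x).1:ℂ) + ((-x).2:ℂ) * Complex.I) ∈ Complex.slitPlane := by
        rw [Complex.mem_slitPlane_iff]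
        left
        simp only [Prod.fst_neg, Prod.snd_neg]
        simp [ha]
      rw [hPeq]
      exact (key (-x) hslit).comp x contDiff_neg.contDiffAt
  · intro x hx
    by_cases hy : ((x.1:ℂ) + (x.2:ℂ) * Complex.I) ∈ Complex.slitPlane
    · exact (lap_slit β hβpos v hv x.1 x.2 hy).2.2
    · obtain ⟨ha, hb⟩ := not_slit_struct hx hy
      have hslit' : (((-x.1 : ℝ):ℂ) + ((0:ℝ):ℂ) * Complex.I) ∈ Complex.slitPlane := by
        rw [Complex.mem_slitPlane_iff]
        left
        simp [ha]
      have H := lap_slit β hβpos v hv (-x.1) 0 hslit'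
      rw [hb]
      have hfeven : (fun t : ℝ => Pfun v (t, (0:ℝ))) = fun t => Pfun v (-t, 0) := by
        funext t
        calc Pfun v (t, (0:ℝ)) = Pfun v (-(t, (0:ℝ))) := (Pfun_neg hv.2.1 (t, 0)).symm
          _ = Pfun v (-t, 0) := by rw [Prod.neg_mk, neg_zero]
      have e1 : deriv (deriv (fun t : ℝ => Pfun v (t, (0:ℝ)))) x.1
          = deriv (deriv (fun t : ℝ => Pfun v (t, (0:ℝ)))) (-x.1) := by
        conv_lhs => rw [hfeven]
        exact deriv2_comp_neg (fun t => Pfun v (t, 0)) x.1 H.1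
      have hq : (fun t : ℝ => Pfun v (x.1, t)) = fun t => Pfun v (-x.1, -t) := by
        funext t
        calc Pfun v (x.1, t) = Pfun v (-(x.1, t)) := (Pfun_neg hv.2.1 _).symm
          _ = Pfun v (-x.1, -t) := by rw [Prod.neg_mk]
      have e2 : deriv (deriv (fun t : ℝ => Pfun v (x.1, t))) 0
          = deriv (deriv (fun t : ℝ => Pfun v (-x.1, t))) 0 := by
        rw [hq]
        have := deriv2_comp_neg (fun t => Pfun v (-x.1, t)) 0 (by simpa using H.2.1)
        simpa using this
      rw [e1, e2]
      rw [show β * x.1^2 + (0:ℝ)^2 = β * (-x.1)^2 + 0^2 by ring]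
      exact H.2.2
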